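/- Let Y be a closed subspace of a Banach space X. Then for every nonempty finite subset F = {x₁,…,xₙ} of X, the restricted Chebyshev radius of F with respect to the closed unit ball of Y equals the restricted Chebyshev radius of F (viewed in X**) with respect to the closed unit ball of Y⊥⊥: rad_{B_{Y⊥⊥}}(F) = rad_{B_Y}(F). -/

import Mathlib

set_option maxHeartbeats 1000000


open Metric Set Pointwise

/-- `r(x,B) = sup_{b ∈ B} ‖x - b‖`. -/
noncomputable def chebR {X : Type*} [NormedAddCommGroup X] (x : X) (B : Set X) : ℝ :=
  ⨆ b : B, ‖x - (b : X)‖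

/-- `rad_V(B) = inf_{v ∈ V} r(v,B)`, the restricted Chebyshev radius. -/
noncomputable def chebRad {X : Type*} [NormedAddCommGroup X] (V B : Set X) : ℝ :=
  ⨅ v : V, chebR (v : X) B

/-- `cent_V(B)`, the set of restricted Chebyshev centers of `B` w.r.t. `V`. -/
noncomputable def chebCent {X : Type*} [NormedAddCommGroup X] (V B : Set X) : Set X :=
  {v ∈ V | chebR v B ≤ chebRad V B}

/-- `cent_V(B,δ) = {v ∈ V : r(v,B) ≤ rad_V(B) + δ}`. -/
noncomputable def chebCentA {X : Type*} [NormedAddCommGroup X] (V B : Set X) (δ : ℝ) : Set X :=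
  {v ∈ V | chebR v B ≤ chebRad V B + δ}

open NormedSpace in
/-- The double annihilator `Y⊥⊥` of `Y`, as a subset of the bidual `X**`. -/
def biann {X : Type*} [NormedAddCommGroup X] [NormedSpace ℝ X] (Y : Submodule ℝ X) :
    Set (StrongDual ℝ (StrongDual ℝ X)) :=
  {Φ | ∀ f : StrongDual ℝ X, (∀ y ∈ Y, f y = 0) → Φ f = 0}

section Helpers

variable {X : Type*} [NormedAddCommGroup X]

private lemma chebR_le {B : Set X} (hB : B.Finite) (hne : B.Nonempty) {v : X} {r : ℝ}
    (h : ∀ b ∈ B, ‖v - b‖ ≤ r) : chebR v B ≤ r := by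
  haveI := hB.to_subtype
  haveI := hne.to_subtype
  exact ciSup_le fun b => h b b.2

private lemma le_chebR {B : Set X} (hB : B.Finite) {v b : X} (hb : b ∈ B) :
    ‖v - b‖ ≤ chebR v B := by
  haveI := hB.to_subtype
  have hbdd : BddAbove (Set.range fun b : B => ‖v - (b : X)‖) :=
    Set.Finite.bddAbove (Set.finite_range _)
  exact le_ciSup hbdd (⟨b, hb⟩ : B)

private lemma chebR_nonneg {B : Set X} (hB : B.Finite) (hne : B.Nonempty) (v : X) :
    0 ≤ chebR v B :=
  (norm_nonneg _).trans (le_chebR hB hne.choose_spec)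

private lemma chebRad_le {B V : Set X} (hB : B.Finite) (hne : B.Nonempty) {v : X} (hv : v ∈ V) :
    chebRad V B ≤ chebR v B := by
  refine ciInf_le ⟨0, ?_⟩ (⟨v, hv⟩ : V)
  rintro r ⟨w, rfl⟩
  exact chebR_nonneg hB hne _

private lemma le_chebRad {B V : Set X} (hV : V.Nonempty) {r : ℝ}
    (h : ∀ v ∈ V, r ≤ chebR v B) : r ≤ chebRad V B := by
  haveI := hV.to_subtype
  exact le_ciInf fun v => h v v.2

end Helpers

section WD

variable {X : Type*} [NormedAddCommGroup X] [NormedSpace ℝ X]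

private lemma wadd (φ ψ : WeakDual ℝ X) (x : X) : (φ + ψ) x = φ x + ψ x := rfl

private lemma wsmul (a : ℝ) (φ : WeakDual ℝ X) (x : X) : (a • φ) x = a * φ x := rfl

private lemma wzero (x : X) : (0 : WeakDual ℝ X) x = 0 := rfl

private lemma wnd (φ : WeakDual ℝ X) (x : X) : WeakDual.toStrongDual φ x = φ x := rfl

open NormedSpace Finset in
/-- Strong duality for the restricted Chebyshev radius of a finite set. -/
private lemma strong_duality (Y : Submodule ℝ X) (F : Set X) [Fintype ↥F]
    (hFne : F.Nonempty) {α : ℝ} (hα0 : 0 ≤ α)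
    (hα : α < chebRad ((Y : Set X) ∩ closedBall 0 1) F) :
    ∃ g : ↥F → StrongDual ℝ X, (∑ i, ‖g i‖) ≤ 1 ∧
      ∀ y ∈ Y, ‖y‖ ≤ 1 → α ≤ ∑ i, g i (y - (i : X)) := by
  classical
  have hFfin : F.Finite := Set.toFinite F
  set BY : Set X := (Y : Set X) ∩ closedBall 0 1 with hBYdef
  set K : Set (↥F → WeakDual ℝ X) :=
    {g | ∑ i, ‖WeakDual.toStrongDual (g i)‖ ≤ 1} with hKdef
  have hK0 : (0 : ↥F → WeakDual ℝ X) ∈ K := by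
    simp [hKdef]
  have hKeq : K = ⋂ (u : ↥F → X) (_ : ∀ i, ‖u i‖ ≤ 1),
      {g : ↥F → WeakDual ℝ X | ∑ i, g i (u i) ≤ 1} := by
    ext g
    simp only [hKdef, Set.mem_setOf_eq, Set.mem_iInter]
    constructor
    · intro hg u hu
      refine le_trans (Finset.sum_le_sum fun i _ => ?_) hg
      calc g i (u i) ≤ ‖WeakDual.toStrongDual (g i) (u i)‖ := by
            rw [wnd, Real.norm_eq_abs]; exact le_abs_self _
        _ ≤ ‖WeakDual.toStrongDual (g i)‖ * ‖u i‖ := ContinuousLinearMap.le_opNorm _ _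
        _ ≤ ‖WeakDual.toStrongDual (g i)‖ * 1 :=
            mul_le_mul_of_nonneg_left (hu i) (norm_nonneg _)
        _ = ‖WeakDual.toStrongDual (g i)‖ := mul_one _
    · intro hg
      by_contra hlt
      push_neg at hlt
      set n : ℕ := Fintype.card ↥F with hn
      have hnpos : 0 < (n : ℝ) := by
        haveI : Nonempty ↥F := hFne.to_subtype
        exact_mod_cast Fintype.card_pos
      set δ : ℝ := (∑ i, ‖WeakDual.toStrongDual (g i)‖ - 1) / n with hδ
      have hδpos : 0 < δ := div_pos (by linarith) hnpos
      have hchoice : ∀ i : ↥F, ∃ x : X, ‖x‖ ≤ 1 ∧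
          ‖WeakDual.toStrongDual (g i)‖ - δ < g i x := by
        intro i
        rcases lt_or_ge (‖WeakDual.toStrongDual (g i)‖ - δ) 0 with hneg | hpos
        · refine ⟨0, by simp, ?_⟩
          rw [map_zero]
          linarith
        · obtain ⟨x, hx1, hx2⟩ := ContinuousLinearMap.exists_lt_apply_of_lt_opNorm
            (WeakDual.toStrongDual (g i)) (show ‖WeakDual.toStrongDual (g i)‖ - δ
              < ‖WeakDual.toStrongDual (g i)‖ by linarith)
          rcases le_or_gt 0 (g i x) with hs | hs
          · refine ⟨x, hx1.le, ?_⟩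
            rwa [wnd, Real.norm_eq_abs, abs_of_nonneg hs] at hx2
          · refine ⟨-x, by simpa using hx1.le, ?_⟩
            rw [wnd, Real.norm_eq_abs, abs_of_neg hs] at hx2
            rw [map_neg]
            linarith
      choose u hu1 hu2 using hchoice
      have hgu := hg u hu1
      have hsum : ∑ i, (‖WeakDual.toStrongDual (g i)‖ - δ) < ∑ i, g i (u i) := by
        haveI : Nonempty ↥F := hFne.to_subtype
        exact Finset.sum_lt_sum_of_nonempty Finset.univ_nonempty fun i _ => hu2 i
      have hcard : ∑ _i : ↥F, δ = n * δ := by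
        rw [Finset.sum_const, Finset.card_univ, nsmul_eq_mul, hn]
      rw [Finset.sum_sub_distrib, hcard] at hsum
      have hnd : (n : ℝ) * δ = ∑ i, ‖WeakDual.toStrongDual (g i)‖ - 1 := by
        rw [hδ]
        field_simp
      rw [hnd] at hsum
      linarith
  have hKclosed : IsClosed K := by
    rw [hKeq]
    refine isClosed_iInter fun u => isClosed_iInter fun _ => ?_
    refine isClosed_le ?_ continuous_const
    exact continuous_finset_sum _ fun i _ =>
      (WeakDual.eval_continuous (u i)).comp (continuous_apply i)
  have hKcpt : IsCompact K := by
    refine IsCompact.of_isClosed_subset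
      (isCompact_univ_pi fun _ : ↥F => WeakDual.isCompact_closedBall (𝕜 := ℝ) (E := X) 0 1)
      hKclosed ?_
    intro g hg i _
    simp only [Set.mem_preimage, mem_closedBall_zero_iff]
    calc ‖WeakDual.toStrongDual (g i)‖
        ≤ ∑ j, ‖WeakDual.toStrongDual (g j)‖ :=
          Finset.single_le_sum (f := fun j : ↥F => ‖WeakDual.toStrongDual (g j)‖)
            (fun j _ => norm_nonneg _) (Finset.mem_univ i)
      _ ≤ 1 := hg
  have hKconv : Convex ℝ K := by
    intro g1 hg1 g2 hg2 a b ha hb hab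
    show ∑ i, ‖WeakDual.toStrongDual ((a • g1 + b • g2) i)‖ ≤ 1
    have hptwise : ∀ i : ↥F, ‖WeakDual.toStrongDual ((a • g1 + b • g2) i)‖
        ≤ a * ‖WeakDual.toStrongDual (g1 i)‖ + b * ‖WeakDual.toStrongDual (g2 i)‖ := by
      intro i
      have hi : (a • g1 + b • g2) i = a • g1 i + b • g2 i := rfl
      rw [hi, map_add, map_smul, map_smul]
      refine (norm_add_le _ _).trans ?_
      rw [norm_smul, norm_smul, Real.norm_eq_abs, Real.norm_eq_abs,
        abs_of_nonneg ha, abs_of_nonneg hb]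
    calc ∑ i, ‖WeakDual.toStrongDual ((a • g1 + b • g2) i)‖
        ≤ ∑ i, (a * ‖WeakDual.toStrongDual (g1 i)‖ + b * ‖WeakDual.toStrongDual (g2 i)‖) :=
          Finset.sum_le_sum fun i _ => hptwise i
      _ = a * (∑ i, ‖WeakDual.toStrongDual (g1 i)‖)
          + b * (∑ i, ‖WeakDual.toStrongDual (g2 i)‖) := by
          rw [Finset.sum_add_distrib, Finset.mul_sum, Finset.mul_sum]
      _ ≤ a * 1 + b * 1 := by
          gcongr
          · exact hg1
          · exact hg2
      _ = 1 := by linarith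
  set t : ↥BY → Set (↥F → WeakDual ℝ X) :=
    fun y => {g | α ≤ ∑ i, g i ((y : X) - (i : X))} with htdef
  have htclosed : ∀ y, IsClosed (t y) := by
    intro y
    refine isClosed_le continuous_const ?_
    exact continuous_finset_sum _ fun i _ =>
      (WeakDual.eval_continuous ((y : X) - (i : X))).comp (continuous_apply i)
  have hFIP : ∀ u : Finset ↥BY, (K ∩ ⋂ y ∈ u, t y).Nonempty := by
    intro u
    set Ψ : (↥F → WeakDual ℝ X) → (↥u → ℝ) :=
      fun g j => ∑ i, g i (((j : ↥BY) : X) - (i : X)) with hΨdef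
    set Q : Set (↥u → ℝ) := {c | ∀ j, α ≤ c j} with hQdef
    suffices h : (Ψ '' K ∩ Q).Nonempty by
      obtain ⟨c, ⟨g, hgK, rfl⟩, hcQ⟩ := h
      refine ⟨g, hgK, ?_⟩
      simp only [Set.mem_iInter]
      intro y hy
      exact hcQ ⟨y, hy⟩
    by_contra hnon
    have hdisj : Disjoint (Ψ '' K) Q :=
      Set.disjoint_iff_inter_eq_empty.2 (Set.not_nonempty_iff_eq_empty.1 hnon)
    have hΨapp : ∀ (g : ↥F → WeakDual ℝ X) (j : ↥u),
        Ψ g j = ∑ i, g i (((j : ↥BY) : X) - (i : X)) := fun _ _ => rfl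
    have hΨlin : IsLinearMap ℝ Ψ := by
      constructor
      · intro g1 g2
        funext j
        show Ψ (g1 + g2) j = Ψ g1 j + Ψ g2 j
        rw [hΨapp, hΨapp, hΨapp, ← Finset.sum_add_distrib]
        exact Finset.sum_congr rfl fun i _ => wadd (g1 i) (g2 i) _
      · intro a g
        funext j
        show Ψ (a • g) j = a * Ψ g j
        rw [hΨapp, hΨapp, Finset.mul_sum]
        exact Finset.sum_congr rfl fun i _ => wsmul a (g i) _
    have hCconv : Convex ℝ (Ψ '' K) := hKconv.is_linear_image hΨlin
    have hΨcont : Continuous Ψ := by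
      refine continuous_pi fun j => continuous_finset_sum _ fun i _ => ?_
      exact (WeakDual.eval_continuous _).comp (continuous_apply i)
    have hCcpt : IsCompact (Ψ '' K) := hKcpt.image hΨcont
    have hQconv : Convex ℝ Q := by
      intro c1 h1 c2 h2 a b ha hb hab j
      have hj1 := h1 j
      have hj2 := h2 j
      simp only [Pi.add_apply, Pi.smul_apply, smul_eq_mul]
      nlinarith
    have hQclosed : IsClosed Q := by
      have : Q = ⋂ j, {c : ↥u → ℝ | α ≤ c j} := by
        ext c; simp [hQdef, Set.mem_iInter]
      rw [this]
      exact isClosed_iInter fun j => isClosed_le continuous_const (continuous_apply j)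
    obtain ⟨f, a, b, hfa, hab, hfb⟩ :=
      geometric_hahn_banach_compact_closed hCconv hCcpt hQconv hQclosed hdisj
    set μ : ↥u → ℝ := fun j => f (Pi.single j 1) with hμdef
    have hrep : ∀ c : ↥u → ℝ, f c = ∑ j, c j * μ j := by
      intro c
      conv_lhs => rw [← Finset.univ_sum_single c]
      rw [map_sum]
      refine Finset.sum_congr rfl fun j _ => ?_
      have hsingle : Pi.single j (c j) = c j • (Pi.single j 1 : ↥u → ℝ) := by
        rw [← Pi.single_smul, smul_eq_mul, mul_one]
      rw [hsingle, map_smul, smul_eq_mul, hμdef]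
    have hconst : ∀ s : ℝ, f (fun _ => s) = s * ∑ j, μ j := by
      intro s
      rw [hrep (fun _ => s), Finset.mul_sum]
    have hαQ : (fun _ : ↥u => α) ∈ Q := fun j => le_refl α
    have hμ0 : ∀ j, 0 ≤ μ j := by
      intro j
      by_contra hneg
      push_neg at hneg
      set T : ℝ := (f (fun _ : ↥u => α) - b) / (-μ j) with hT
      have hfb' : b < f (fun _ : ↥u => α) := hfb _ hαQ
      have hT0 : 0 ≤ T := div_nonneg (by linarith) (by linarith)
      have hq : (fun _ : ↥u => α) + T • (Pi.single j 1 : ↥u → ℝ) ∈ Q := by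
        intro k
        simp only [Pi.add_apply, Pi.smul_apply, smul_eq_mul]
        rcases eq_or_ne k j with rfl | hkj
        · rw [Pi.single_eq_same]
          nlinarith
        · rw [Pi.single_eq_of_ne hkj]
          simp
      have hval := hfb _ hq
      rw [map_add, map_smul, smul_eq_mul] at hval
      have hTμ : T * f (Pi.single j 1) = b - f (fun _ : ↥u => α) := by
        have hμne : μ j ≠ 0 := ne_of_lt hneg
        have : T * μ j = b - f (fun _ : ↥u => α) := by
          rw [hT]
          field_simp [hμne]
          ring
        simpa [hμdef] using this
      rw [hTμ] at hval
      linarith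
    set τ : ℝ := ∑ j, μ j with hτdef
    have hτ0 : 0 ≤ τ := Finset.sum_nonneg fun j _ => hμ0 j
    have hΨ0 : Ψ (0 : ↥F → WeakDual ℝ X) = 0 := by
      funext j
      show Ψ 0 j = 0
      rw [hΨapp]
      exact Finset.sum_eq_zero fun i _ => wzero _
    have hf0 : f (Ψ 0) < a := hfa _ ⟨0, hK0, rfl⟩
    rw [hΨ0, map_zero] at hf0
    have hbτ : b < α * τ := by
      have := hfb _ hαQ
      rwa [hconst] at this
    have hτpos : 0 < τ := by
      rcases hτ0.lt_or_eq with h | h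
      · exact h
      · exfalso
        rw [← h, mul_zero] at hbτ
        linarith
    set z : X := ∑ j : ↥u, μ j • (((j : ↥BY) : X)) with hzdef
    set y' : X := τ⁻¹ • z with hydef
    have hzY : z ∈ Y := by
      refine Submodule.sum_mem _ fun j _ => Submodule.smul_mem _ _ ?_
      exact ((j : ↥BY).2).1
    have hyY : y' ∈ Y := Submodule.smul_mem _ _ hzY
    have hznorm : ‖z‖ ≤ τ := by
      calc ‖z‖ ≤ ∑ j : ↥u, ‖μ j • (((j : ↥BY) : X))‖ := norm_sum_le _ _
        _ ≤ ∑ j : ↥u, μ j := by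
            refine Finset.sum_le_sum fun j _ => ?_
            rw [norm_smul, Real.norm_eq_abs, abs_of_nonneg (hμ0 j)]
            have hj : ‖((j : ↥BY) : X)‖ ≤ 1 :=
              mem_closedBall_zero_iff.1 ((j : ↥BY).2).2
            nlinarith [hμ0 j]
        _ = τ := rfl
    have hynorm : ‖y'‖ ≤ 1 := by
      rw [hydef, norm_smul, Real.norm_eq_abs, abs_of_nonneg (inv_nonneg.2 hτ0)]
      rw [← inv_mul_cancel₀ hτpos.ne']
      exact mul_le_mul_of_nonneg_left hznorm (inv_nonneg.2 hτ0)
    have hyBY : y' ∈ BY := ⟨hyY, mem_closedBall_zero_iff.2 hynorm⟩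
    have hτy : τ • y' = z := by
      rw [hydef, smul_smul, mul_inv_cancel₀ hτpos.ne', one_smul]
    have hkey : ∀ g ∈ K, ∑ i, (g i) (y' - (i : X)) < α := by
      intro g hg
      have h1 : f (Ψ g) < a := hfa _ ⟨g, hg, rfl⟩
      have h2 : f (Ψ g) = τ * ∑ i, g i (y' - (i : X)) := by
        rw [hrep]
        calc ∑ j, Ψ g j * μ j
            = ∑ j, ∑ i, (μ j * g i (((j : ↥BY) : X)) - μ j * g i ((i : X))) := by
              refine Finset.sum_congr rfl fun j _ => ?_
              rw [hΨapp, Finset.sum_mul]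
              refine Finset.sum_congr rfl fun i _ => ?_
              rw [map_sub (g i)]
              ring
          _ = ∑ i, ∑ j, (μ j * g i (((j : ↥BY) : X)) - μ j * g i ((i : X))) :=
              Finset.sum_comm
          _ = ∑ i, (g i z - τ * g i ((i : X))) := by
              refine Finset.sum_congr rfl fun i _ => ?_
              rw [Finset.sum_sub_distrib, ← Finset.sum_mul, ← hτdef]
              congr 1
              rw [hzdef, map_sum (g i)]
              refine Finset.sum_congr rfl fun j _ => ?_
              rw [map_smul (g i), smul_eq_mul]
          _ = τ * ∑ i, g i (y' - (i : X)) := by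
              rw [Finset.mul_sum]
              refine Finset.sum_congr rfl fun i _ => ?_
              rw [← hτy, map_sub (g i), map_smul (g i), smul_eq_mul]
              ring
      rw [h2] at h1
      have h3 : τ * (∑ i, g i (y' - (i : X))) < τ * α := by nlinarith
      exact (mul_lt_mul_iff_right₀ hτpos).1 h3
    have hlt : α < chebR y' F := lt_of_lt_of_le hα (chebRad_le hFfin hFne hyBY)
    obtain ⟨x₀, hx₀F, hx₀⟩ : ∃ x₀ ∈ F, α < ‖y' - x₀‖ := by
      by_contra hc
      push_neg at hc
      have := chebR_le hFfin hFne hc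
      linarith
    have hne0 : y' - x₀ ≠ 0 := by
      intro h
      rw [h, norm_zero] at hx₀
      linarith
    obtain ⟨f₀, hf₀n, hf₀x⟩ := exists_dual_vector ℝ (y' - x₀) (norm_ne_zero_iff.2 hne0)
    set i₀ : ↥F := ⟨x₀, hx₀F⟩ with hi₀
    set gs : ↥F → WeakDual ℝ X :=
      fun i => if i = i₀ then WeakDual.toStrongDual.symm f₀ else 0 with hgs
    have hgsK : gs ∈ K := by
      show ∑ i, ‖WeakDual.toStrongDual (gs i)‖ ≤ 1
      have hns : ∀ i : ↥F, ‖WeakDual.toStrongDual (gs i)‖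
          = if i = i₀ then (1 : ℝ) else 0 := by
        intro i
        simp only [hgs]
        split_ifs with h
        · rw [LinearEquiv.apply_symm_apply]
          exact hf₀n
        · simp
      rw [Finset.sum_congr rfl fun i _ => hns i, Finset.sum_ite_eq' Finset.univ i₀ fun _ => (1 : ℝ)]
      simp
    have hgsval : ∑ i, gs i (y' - (i : X)) = ‖y' - x₀‖ := by
      have hvs : ∀ i : ↥F, gs i (y' - (i : X))
          = if i = i₀ then ‖y' - x₀‖ else 0 := by
        intro i
        simp only [hgs]
        split_ifs with h
        · subst h
          have happ : (WeakDual.toStrongDual.symm f₀ : WeakDual ℝ X) (y' - ((i₀ : ↥F) : X))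
              = f₀ (y' - x₀) := rfl
          rw [happ, hf₀x]
          norm_cast
        · exact wzero _
      rw [Finset.sum_congr rfl fun i _ => hvs i,
        Finset.sum_ite_eq' Finset.univ i₀ fun _ => ‖y' - x₀‖]
      simp
    have := hkey gs hgsK
    rw [hgsval] at this
    linarith
  obtain ⟨g, hgK, hgt⟩ := hKcpt.inter_iInter_nonempty t htclosed hFIP
  refine ⟨fun i => WeakDual.toStrongDual (g i), hgK, ?_⟩
  intro y hyY hyn
  have hmem : g ∈ t ⟨y, ⟨hyY, mem_closedBall_zero_iff.2 hyn⟩⟩ := by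
    exact Set.mem_iInter.1 hgt _
  exact hmem

end WD

open NormedSpace in
/-- for finite `F ⊆ X`, `rad_{B_{Y⊥⊥}}(F) = rad_{B_Y}(F)`. -/
theorem stmt_8 {X : Type*} [NormedAddCommGroup X] [NormedSpace ℝ X] [CompleteSpace X]
    (Y : Submodule ℝ X) (hYc : IsClosed (Y : Set X))
    (F : Set X) (hFne : F.Nonempty) (hFfin : F.Finite) :
    chebRad (biann Y ∩ closedBall 0 1) (inclusionInDoubleDual ℝ X '' F)
      = chebRad ((Y : Set X) ∩ closedBall 0 1) F := by
  classical
  haveI := hFfin.fintype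
  have hJnorm : ∀ z : X, ‖inclusionInDoubleDual ℝ X z‖ = ‖z‖ := fun z =>
    (inclusionInDoubleDualLi ℝ (E := X)).norm_map z
  have hJF : ((inclusionInDoubleDual ℝ X) '' F).Finite := hFfin.image _
  have hJFne : ((inclusionInDoubleDual ℝ X) '' F).Nonempty := hFne.image _
  have hBYne : ((Y : Set X) ∩ closedBall 0 1).Nonempty :=
    ⟨0, Y.zero_mem, mem_closedBall_zero_iff.2 (by simp)⟩
  have hBbne : (biann Y ∩ closedBall 0 1).Nonempty :=
    ⟨(0 : StrongDual ℝ (StrongDual ℝ X)), fun f _ => rfl, mem_closedBall_self (zero_le_one : (0 : ℝ) ≤ 1)⟩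
  have hRJ : ∀ v : X, chebR (inclusionInDoubleDual ℝ X v) ((inclusionInDoubleDual ℝ X) '' F)
      = chebR v F := by
    intro v
    apply le_antisymm
    · refine chebR_le hJF hJFne ?_
      rintro b ⟨x, hx, rfl⟩
      rw [← map_sub, hJnorm]
      exact le_chebR hFfin hx
    · refine chebR_le hFfin hFne ?_
      intro x hx
      rw [← hJnorm (v - x), map_sub]
      exact le_chebR hJF (Set.mem_image_of_mem _ hx)
  apply le_antisymm
  · -- easy direction
    haveI := hBYne.to_subtype
    refine le_ciInf fun y => ?_
    have hyY : (y : X) ∈ Y := y.2.1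
    have hyn : ‖(y : X)‖ ≤ 1 := mem_closedBall_zero_iff.1 y.2.2
    have hmem : inclusionInDoubleDual ℝ X (y : X) ∈ biann Y ∩ closedBall 0 1 := by
      constructor
      · intro f hf
        rw [dual_def]
        exact hf _ hyY
      · rw [mem_closedBall_zero_iff (E := StrongDual ℝ (StrongDual ℝ X)), hJnorm]
        exact hyn
    calc chebRad (biann Y ∩ closedBall 0 1) ((inclusionInDoubleDual ℝ X) '' F)
        ≤ chebR (inclusionInDoubleDual ℝ X (y : X)) ((inclusionInDoubleDual ℝ X) '' F) :=
          chebRad_le hJF hJFne hmem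
      _ = chebR (y : X) F := hRJ _
  · -- hard direction
    haveI := hBbne.to_subtype
    refine le_ciInf fun Φv => ?_
    set Φ : StrongDual ℝ (StrongDual ℝ X) := (Φv : StrongDual ℝ (StrongDual ℝ X)) with hΦ
    have hΦbi : Φ ∈ biann Y := Φv.2.1
    have hΦn : ‖Φ‖ ≤ 1 := (mem_closedBall_zero_iff (E := StrongDual ℝ (StrongDual ℝ X))).1 Φv.2.2
    by_contra hcon
    push_neg at hcon
    set m : ℝ := chebRad ((Y : Set X) ∩ closedBall 0 1) F with hm
    set ρ : ℝ := chebR Φ ((inclusionInDoubleDual ℝ X) '' F) with hρ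
    have hρm : ρ < m := hcon
    have hρ0 : 0 ≤ ρ := chebR_nonneg hJF hJFne _
    set α : ℝ := (ρ + m) / 2 with hαdef
    have hα0 : 0 ≤ α := by rw [hαdef]; linarith
    have hαm : α < m := by rw [hαdef]; linarith
    have hρα : ρ < α := by rw [hαdef]; linarith
    obtain ⟨g, hgsum, hgval⟩ := strong_duality Y F hFne hα0 hαm
    set h : StrongDual ℝ X := ∑ i, g i with hh
    set c : ℝ := ∑ i, g i ((i : X)) with hc
    have hyb : ∀ y ∈ Y, ‖y‖ ≤ 1 → α + c ≤ h y := by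
      intro y hy hyn
      have hval := hgval y hy hyn
      have hsum : ∑ i, g i (y - (i : X)) = h y - c := by
        rw [hh, hc, ContinuousLinearMap.sum_apply, ← Finset.sum_sub_distrib]
        exact Finset.sum_congr rfl fun i _ => map_sub (g i) _ _
      rw [hsum] at hval
      linarith
    have hyb2 : ∀ y ∈ Y, ‖y‖ ≤ 1 → h y ≤ -(α + c) := by
      intro y hy hyn
      have := hyb (-y) (Y.neg_mem hy) (by simpa using hyn)
      rw [map_neg] at this
      linarith
    have hac : α + c ≤ 0 := by
      have h1 := hyb 0 Y.zero_mem (by simp)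
      have h2 := hyb2 0 Y.zero_mem (by simp)
      rw [map_zero] at h1 h2
      linarith
    have hbound : ∀ y : ↥Y, ‖h (y : X)‖ ≤ -(α + c) * ‖(y : X)‖ := by
      intro y
      rcases eq_or_ne (y : X) 0 with h0 | h0
      · rw [h0, map_zero, norm_zero]
        simp
      · set ny : ℝ := ‖(y : X)‖ with hny
        have hnypos : 0 < ny := norm_pos_iff.2 h0
        set z : X := ny⁻¹ • (y : X) with hz
        have hzY : z ∈ Y := Y.smul_mem _ y.2
        have hzn : ‖z‖ ≤ 1 := by
          rw [hz, norm_smul, Real.norm_eq_abs, abs_of_nonneg (inv_nonneg.2 hnypos.le),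
            ← hny, inv_mul_cancel₀ hnypos.ne']
        have h1 := hyb z hzY hzn
        have h2 := hyb2 z hzY hzn
        have hyz : (y : X) = ny • z := by
          rw [hz, smul_smul, mul_inv_cancel₀ hnypos.ne', one_smul]
        rw [hyz, map_smul, smul_eq_mul, Real.norm_eq_abs, abs_mul,
          abs_of_nonneg hnypos.le]
        have habs : |h z| ≤ -(α + c) := abs_le.2 ⟨by linarith, h2⟩
        calc ny * |h z| ≤ ny * -(α + c) := mul_le_mul_of_nonneg_left habs hnypos.le
          _ = -(α + c) * ny := mul_comm _ _
    have hYop : ‖h.comp (Submodule.subtypeL Y)‖ ≤ -(α + c) := by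
      refine ContinuousLinearMap.opNorm_le_bound _ (by linarith) fun y => ?_
      simpa using hbound y
    obtain ⟨fe, hfe, hfn⟩ := exists_extension_norm_eq Y (h.comp (Submodule.subtypeL Y))
    have hΦeq : Φ h = Φ fe := by
      have hvan : Φ (h - fe) = 0 := by
        refine hΦbi _ fun v hv => ?_
        have := hfe ⟨v, hv⟩
        simp only [ContinuousLinearMap.coe_comp', Function.comp_apply,
          Submodule.coe_subtypeL', Submodule.coe_subtype] at this
        rw [ContinuousLinearMap.sub_apply, this]
        ring
      have := map_sub Φ h fe
      rw [hvan] at this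
      linarith [this]
    have hΦfeb : ‖Φ fe‖ ≤ -(α + c) := by
      calc ‖Φ fe‖ ≤ ‖Φ‖ * ‖fe‖ := Φ.le_opNorm fe
        _ ≤ 1 * -(α + c) := by
            refine mul_le_mul hΦn ?_ (norm_nonneg _) zero_le_one
            rw [hfn]
            exact hYop
        _ = -(α + c) := one_mul _
    have hΦh : α + c ≤ Φ h := by
      rw [hΦeq]
      have := (abs_le.1 (by rwa [Real.norm_eq_abs] at hΦfeb)).1
      linarith
    have hsum2 : Φ h - c = ∑ i, (Φ (g i) - g i ((i : X))) := by
      rw [hh, hc, map_sum, ← Finset.sum_sub_distrib]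
    have hterm : ∀ i : ↥F, Φ (g i) - g i ((i : X)) ≤ ρ * ‖g i‖ := by
      intro i
      have hmem : inclusionInDoubleDual ℝ X ((i : X)) ∈ (inclusionInDoubleDual ℝ X) '' F :=
        Set.mem_image_of_mem _ i.2
      have h1 : ‖Φ - inclusionInDoubleDual ℝ X ((i : X))‖ ≤ ρ := le_chebR hJF hmem
      have h2 : Φ (g i) - g i ((i : X)) = (Φ - inclusionInDoubleDual ℝ X ((i : X))) (g i) := by
        rw [ContinuousLinearMap.sub_apply, dual_def]
      rw [h2]
      calc (Φ - inclusionInDoubleDual ℝ X ((i : X))) (g i)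
          ≤ ‖(Φ - inclusionInDoubleDual ℝ X ((i : X))) (g i)‖ := by
            rw [Real.norm_eq_abs]; exact le_abs_self _
        _ ≤ ‖Φ - inclusionInDoubleDual ℝ X ((i : X))‖ * ‖g i‖ :=
            ContinuousLinearMap.le_opNorm _ _
        _ ≤ ρ * ‖g i‖ := mul_le_mul_of_nonneg_right h1 (norm_nonneg _)
    have hfinal : α ≤ ρ := by
      have h3 : Φ h - c ≤ ρ * ∑ i, ‖g i‖ := by
        rw [hsum2, Finset.mul_sum]
        exact Finset.sum_le_sum fun i _ => hterm i
      have h4 : ρ * ∑ i, ‖g i‖ ≤ ρ * 1 := mul_le_mul_of_nonneg_left hgsum hρ0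
      linarith
    linarith
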